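/- Let z_1,…,z_N be N distinct complex numbers, let α_1,…,α_r be complex numbers none of which equals any node z_k, let m_1,…,m_r be nonnegative integers, and let D_{m_1,…,m_r} be the N×N matrix with diagonal entries Σ_{k≠i} 1/(z_i − z_k) − Σ_{l=1}^r m_l/(z_i − α_l) and off-diagonal entries (for i ≠ j) (1/(z_i − z_j)) · (ω'(z_i)/ω'(z_j)) · ∏_{l=1}^r ((z_j − α_l)/(z_i − α_l))^{m_l}, where ω'(z_i) = ∏_{k≠i}(z_i − z_k). If P is a complex polynomial of degree at most N−1 and f(z) = P(z)/∏_{l=1}^r (z − α_l)^{m_l}, then for every i, f'(z_i) = Σ_{j=1}^N (D_{m_1,…,m_r})_{ij} f(z_j). -/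

import Mathlib

open Finset Polynomial

lemma derivative_finset_prod' {ι : Type*} [DecidableEq ι] (s : Finset ι) (f : ι → Polynomial ℂ) :
    Polynomial.derivative (∏ i ∈ s, f i)
      = ∑ i ∈ s, (∏ j ∈ s.erase i, f j) * Polynomial.derivative (f i) := by
  induction s using Finset.induction_on with
  | empty => simp
  | @insert a s ha ih =>
    rw [Finset.prod_insert ha, Polynomial.derivative_mul, ih, Finset.sum_insert ha,
      Finset.erase_insert ha, Finset.mul_sum]
    have h2 : ∀ i ∈ s, (∏ j ∈ (insert a s).erase i, f j) * Polynomial.derivative (f i)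
        = f a * ((∏ j ∈ s.erase i, f j) * Polynomial.derivative (f i)) := fun i hi => by
      rw [Finset.erase_insert_of_ne (by rintro rfl; exact ha hi),
        Finset.prod_insert (fun h => ha (Finset.mem_of_mem_erase h)), mul_assoc]
    rw [Finset.sum_congr rfl h2]
    ring

lemma deriv_basisDivisor' (x y : ℂ) :
    Polynomial.derivative (Lagrange.basisDivisor x y) = Polynomial.C (x - y)⁻¹ := by
  simp [Lagrange.basisDivisor]

lemma deriv_basis_self' {ι : Type*} [DecidableEq ι] {s : Finset ι} {v : ι → ℂ}
    (hvs : Set.InjOn v s) {i : ι} (hi : i ∈ s) :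
    (Polynomial.derivative (Lagrange.basis s v i)).eval (v i)
      = ∑ k ∈ s.erase i, (v i - v k)⁻¹ := by
  rw [Lagrange.basis, derivative_finset_prod', Polynomial.eval_finset_sum]
  refine Finset.sum_congr rfl fun k hk => ?_
  rw [Polynomial.eval_mul, deriv_basisDivisor', Polynomial.eval_C, Polynomial.eval_prod]
  rw [Finset.prod_congr rfl (fun j hj => ?_), Finset.prod_const_one, one_mul]
  have hj0 := Finset.mem_of_mem_erase hj
  have hj' := Finset.mem_erase.mp hj0
  exact Lagrange.eval_basisDivisor_left_of_ne
    (fun h => hj'.1 ((hvs hi (Finset.mem_of_mem_erase hj0) h).symm))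

lemma deriv_basis_ne' {ι : Type*} [DecidableEq ι] {s : Finset ι} {v : ι → ℂ}
    (hvs : Set.InjOn v s) {i j : ι} (hij : i ≠ j) (hi : i ∈ s) (hj : j ∈ s) :
    (Polynomial.derivative (Lagrange.basis s v j)).eval (v i)
      = (∏ k ∈ s.erase i, (v i - v k)) /
          ((v i - v j) * ∏ k ∈ s.erase j, (v j - v k)) := by
  have hiej : i ∈ s.erase j := Finset.mem_erase.mpr ⟨hij, hi⟩
  have hjei : j ∈ s.erase i := Finset.mem_erase.mpr ⟨hij.symm, hj⟩
  rw [Lagrange.basis, derivative_finset_prod', Polynomial.eval_finset_sum]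
  rw [Finset.sum_eq_single_of_mem i hiej (fun k hk hki => ?_)]
  · rw [Polynomial.eval_mul, deriv_basisDivisor', Polynomial.eval_C, Polynomial.eval_prod]
    have hEv : ∀ k' ∈ (s.erase j).erase i,
        (Lagrange.basisDivisor (v j) (v k')).eval (v i)
          = (v j - v k')⁻¹ * (v i - v k') := fun k' _ => by
      simp [Lagrange.basisDivisor]
    rw [Finset.prod_congr rfl hEv, Finset.prod_mul_distrib, Finset.prod_inv_distrib]
    have hE : (s.erase j).erase i = (s.erase i).erase j := Finset.erase_right_comm
    have h1 : ∏ k ∈ s.erase i, (v i - v k)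
        = (v i - v j) * ∏ k ∈ (s.erase i).erase j, (v i - v k) :=
      (Finset.mul_prod_erase _ _ hjei).symm
    have h2 : ∏ k ∈ s.erase j, (v j - v k)
        = (v j - v i) * ∏ k ∈ (s.erase j).erase i, (v j - v k) :=
      (Finset.mul_prod_erase _ _ hiej).symm
    rw [h1, h2, hE]
    have hij' : v i - v j ≠ 0 := sub_ne_zero.mpr (fun h => hij (hvs hi hj h))
    have hji' : v j - v i ≠ 0 := sub_ne_zero.mpr (fun h => hij ((hvs hi hj h.symm)))
    have hB : ∏ k ∈ (s.erase i).erase j, (v j - v k) ≠ 0 := by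
      refine Finset.prod_ne_zero_iff.mpr fun k hk => sub_ne_zero.mpr fun h => ?_
      have hk' : k ∈ s := Finset.mem_of_mem_erase (Finset.mem_of_mem_erase hk)
      exact (Finset.mem_erase.mp hk).1 ((hvs hj hk' h).symm)
    field_simp
  · rw [Polynomial.eval_mul, Polynomial.eval_prod]
    rw [Finset.prod_eq_zero (Finset.mem_erase.mpr ⟨Ne.symm hki, hiej⟩)
      Lagrange.eval_basisDivisor_right, zero_mul]

lemma logderiv_Q' (r : ℕ) (α : Fin r → ℂ) (m : Fin r → ℕ) (z : ℂ) (hz : ∀ l, z ≠ α l) :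
    (Polynomial.derivative (∏ l, (X - C (α l)) ^ (m l))).eval z
      = (∑ l, (m l : ℂ) / (z - α l)) * ∏ l, (z - α l) ^ (m l) := by
  rw [derivative_finset_prod', Polynomial.eval_finset_sum, Finset.sum_mul]
  refine Finset.sum_congr rfl fun l _ => ?_
  have hαl : z - α l ≠ 0 := sub_ne_zero.mpr (hz l)
  simp only [Polynomial.derivative_pow, Polynomial.derivative_X_sub_C, mul_one,
    Polynomial.eval_mul, Polynomial.eval_pow, Polynomial.eval_sub, Polynomial.eval_X,
    Polynomial.eval_C, Polynomial.eval_natCast, Polynomial.eval_prod]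
  rw [← Finset.mul_prod_erase _ (fun l => (z - α l) ^ (m l)) (Finset.mem_univ l)]
  rcases Nat.eq_zero_or_pos (m l) with h | h
  · simp [h]
  · have hpow : (z - α l) ^ (m l) = (z - α l) ^ (m l - 1) * (z - α l) := by
      rw [← pow_succ, Nat.sub_add_cancel h]
    rw [hpow]
    field_simp

/-- The multi-pole rational differentiation matrix `D_{m₁,…,m_r}` is exact on rational
functions `f z = P z / ∏_l (z − α_l)^{m_l}` with `deg P ≤ N − 1`:
`f'(z i) = Σ_j D i j * f (z j)`. -/
theorem multipole_rational_differentiation_matrix (N r : ℕ) (zs : Fin N → ℂ)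
    (hz : Function.Injective zs) (α : Fin r → ℂ) (hα : ∀ l k, α l ≠ zs k)
    (m : Fin r → ℕ) (D : Matrix (Fin N) (Fin N) ℂ)
    (hD : ∀ i j, D i j =
      if i = j then
        (∑ k ∈ Finset.univ.erase i, 1 / (zs i - zs k)) -
          ∑ l, (m l : ℂ) / (zs i - α l)
      else
        (1 / (zs i - zs j)) *
          ((∏ k ∈ Finset.univ.erase i, (zs i - zs k)) /
            (∏ k ∈ Finset.univ.erase j, (zs j - zs k))) *
          ∏ l, ((zs j - α l) / (zs i - α l)) ^ (m l))
    (P : Polynomial ℂ) (hP : P.degree ≤ (N - 1 : ℕ)) (i : Fin N) :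
    deriv (fun z : ℂ => P.eval z / ∏ l, (z - α l) ^ (m l)) (zs i) =
      ∑ j, D i j * (P.eval (zs j) / ∏ l, (zs j - α l) ^ (m l)) := by
  classical
  have hN : 0 < N := i.pos
  set Q : Polynomial ℂ := ∏ l, (X - C (α l)) ^ (m l) with hQdef
  have hQev : ∀ z : ℂ, Q.eval z = ∏ l, (z - α l) ^ (m l) := fun z => by
    simp [hQdef, Polynomial.eval_prod]
  have hne : ∀ (j : Fin N) (l : Fin r), zs j - α l ≠ 0 :=
    fun j l => sub_ne_zero.mpr (fun h => hα l j h.symm)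
  have hQne : ∀ j, (∏ l, (zs j - α l) ^ (m l)) ≠ 0 := fun j =>
    Finset.prod_ne_zero_iff.mpr fun l _ => pow_ne_zero _ (hne j l)
  have hinj : Set.InjOn zs (Finset.univ : Finset (Fin N)) := fun a _ b _ h => hz h
  have hfun : (fun z : ℂ => P.eval z / ∏ l, (z - α l) ^ (m l))
      = fun z => P.eval z / Q.eval z := by
    funext z; rw [hQev]
  rw [hfun, deriv_fun_div (Polynomial.differentiableAt P) (Polynomial.differentiableAt Q)
    (by rw [hQev]; exact hQne i), Polynomial.deriv, Polynomial.deriv]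
  -- derivative of P at node via Lagrange interpolation
  have hdeg : P.degree < ((Finset.univ : Finset (Fin N)).card : WithBot ℕ) := by
    refine lt_of_le_of_lt hP ?_
    rw [Finset.card_univ, Fintype.card_fin]
    exact_mod_cast Nat.sub_lt hN one_pos
  have hPL := Lagrange.eq_interpolate (v := zs) hinj hdeg
  have hder : (Polynomial.derivative P).eval (zs i)
      = ∑ j, P.eval (zs j) *
          (Polynomial.derivative (Lagrange.basis Finset.univ zs j)).eval (zs i) := by
    conv_lhs => rw [hPL]
    rw [Lagrange.interpolate_apply, map_sum, Polynomial.eval_finset_sum]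
    refine Finset.sum_congr rfl fun j _ => ?_
    rw [Polynomial.derivative_C_mul, Polynomial.eval_mul, Polynomial.eval_C]
  rw [hder]
  -- notation
  set g : Fin N → ℂ := fun j => P.eval (zs j) with hg
  set Qv : Fin N → ℂ := fun j => ∏ l, (zs j - α l) ^ (m l) with hQv
  set S : ℂ := ∑ l, (m l : ℂ) / (zs i - α l) with hS
  set w : Fin N → ℂ := fun j => ∏ k ∈ Finset.univ.erase j, (zs j - zs k) with hw
  have hwne : ∀ j, w j ≠ 0 := fun j =>
    Finset.prod_ne_zero_iff.mpr fun k hk => sub_ne_zero.mpr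
      (fun h => (Finset.mem_erase.mp hk).1 (hz h).symm)
  have hQi : Q.eval (zs i) = Qv i := hQev _
  have hQ'i : (Polynomial.derivative Q).eval (zs i) = S * Qv i :=
    logderiv_Q' r α m (zs i) (fun l => fun h => hα l i h.symm)
  rw [hQi, hQ'i]
  -- rewrite basis derivative values
  have hEi : (Polynomial.derivative (Lagrange.basis Finset.univ zs i)).eval (zs i)
      = ∑ k ∈ Finset.univ.erase i, (zs i - zs k)⁻¹ :=
    deriv_basis_self' hinj (Finset.mem_univ i)
  have hEj : ∀ j ∈ Finset.univ.erase i,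
      (Polynomial.derivative (Lagrange.basis Finset.univ zs j)).eval (zs i)
        = w i / ((zs i - zs j) * w j) := fun j hj =>
    deriv_basis_ne' hinj (Finset.mem_erase.mp hj).1.symm (Finset.mem_univ i) (Finset.mem_univ j)
  -- split sums at i
  rw [← Finset.add_sum_erase _ _ (Finset.mem_univ i),
    ← Finset.add_sum_erase (f := fun j => D i j * (g j / Qv j)) _ (Finset.mem_univ i)]
  rw [Finset.sum_congr rfl (fun j hj => by rw [hEj j hj])]
  rw [hEi, hD i i, if_pos rfl]
  have hterm : ∀ j ∈ Finset.univ.erase i,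
      D i j * (g j / Qv j) = g j * (w i / ((zs i - zs j) * w j)) / Qv i := by
    intro j hj
    have hji : j ≠ i := (Finset.mem_erase.mp hj).1
    rw [hD i j, if_neg (Ne.symm hji)]
    have hzij : zs i - zs j ≠ 0 := sub_ne_zero.mpr (fun h => hji (hz h).symm)
    have hprod : (∏ l, ((zs j - α l) / (zs i - α l)) ^ (m l)) = Qv j / Qv i := by
      simp [hQv, div_pow, Finset.prod_div_distrib]
    rw [hprod]
    have h1 := hQne i; have h2 := hQne j; have h3 := hwne i; have h4 := hwne j
    have h1' : Qv i ≠ 0 := h1; have h2' : Qv j ≠ 0 := h2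
    have h3' : (∏ k ∈ Finset.univ.erase i, (zs i - zs k)) ≠ 0 := h3
    have h4' : (∏ k ∈ Finset.univ.erase j, (zs j - zs k)) ≠ 0 := h4
    simp only [hw]
    field_simp
  rw [Finset.sum_congr rfl hterm, ← Finset.sum_div]
  have hQvi := hQne i
  have hIS : (∑ k ∈ Finset.univ.erase i, 1 / (zs i - zs k))
      = ∑ k ∈ Finset.univ.erase i, (zs i - zs k)⁻¹ := by
    simp [one_div]
  rw [hIS]
  field_simp
  simp only [hS, hg, div_eq_mul_inv]
  simp only [mul_comm (eval _ P) (w i)]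
  ring
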